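/- Let ∂ : A → A be a derivation commuting with D (∂∘D = D∘∂) and let g ∈ A be a (weight-1) component of the U(1)_T gauge potential. Define the U(1)_T covariant derivative of a k-adjoint a by 𝒟(k,a) := ∂a + g*(D a) − k•(a*(D g)), i.e., 𝒟(k,a) = ∂a + β(1,g;k,a). Then 𝒟 distributes over the weighted thermal bracket: for all k, ℓ ∈ ℤ and a, b ∈ A, 𝒟(k+ℓ−1, β(k,a;ℓ,b)) = β(k, 𝒟(k,a); ℓ, b) + β(k, a; ℓ, 𝒟(ℓ,b)). -/

import Mathlib

/-- The weighted thermal bracket of a `k`-adjoint `a` with an `ℓ`-adjoint `b`: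
`β(k,a;ℓ,b) := k•(a*(D b)) − ℓ•(b*(D a))` (Appendix F). -/
def wThermalBracket {A : Type*} [CommRing A] (D : A → A) (k : ℤ) (a : A) (l : ℤ) (b : A) : A :=
  k • (a * D b) - l • (b * D a)

/-- The U(1)_T covariant derivative of a `k`-adjoint `a` built from a partial derivative
`∂`, a (weight-1) gauge-potential component `g`, and the thermal translation `D`:
`𝒟(k,a) := ∂a + g*(D a) − k•(a*(D g)) = ∂a + β(1,g;k,a)`. -/
def covDer {A : Type*} [CommRing A] (D del : A → A) (g : A) (k : ℤ) (a : A) : A :=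
  del a + g * D a - k • (a * D g)

/-- **The U(1)_T covariant derivative distributes over the weighted thermal bracket
(Appendix F).**  Let `A` be a commutative ring, `D : A → A` a derivation, `∂ : A → A` a
derivation commuting with `D`, and `g ∈ A` a (weight-1) component of the U(1)_T gauge
potential.  Then for all `k, ℓ ∈ ℤ` and `a, b ∈ A`,
`𝒟(k+ℓ−1, β(k,a;ℓ,b)) = β(k, 𝒟(k,a); ℓ, b) + β(k, a; ℓ, 𝒟(ℓ,b))`. -/
theorem covDer_wThermalBracket {A : Type*} [CommRing A] (D del : A → A) (g : A)
    (hDadd : ∀ a b : A, D (a + b) = D a + D b)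
    (hDleib : ∀ a b : A, D (a * b) = D a * b + a * D b)
    (hdadd : ∀ a b : A, del (a + b) = del a + del b)
    (hdleib : ∀ a b : A, del (a * b) = del a * b + a * del b)
    (hcomm : ∀ a : A, del (D a) = D (del a)) :
    ∀ (k l : ℤ) (a b : A),
      covDer D del g (k + l - 1) (wThermalBracket D k a l b)
        = wThermalBracket D k (covDer D del g k a) l b
          + wThermalBracket D k a l (covDer D del g l b) := by
  have hD0 : D 0 = 0 := by have := hDadd 0 0; simpa using this
  have hd0 : del 0 = 0 := by have := hdadd 0 0; simpa using this
  set Dh : A →+ A := ⟨⟨D, hD0⟩, hDadd⟩ with hDh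
  set dh : A →+ A := ⟨⟨del, hd0⟩, hdadd⟩ with hdh
  have hDsub : ∀ a b : A, D (a - b) = D a - D b := fun a b => Dh.map_sub a b
  have hdsub : ∀ a b : A, del (a - b) = del a - del b := fun a b => dh.map_sub a b
  have hDz : ∀ (n : ℤ) (a : A), D (n • a) = n • D a := fun n a => Dh.map_zsmul n a
  have hdz : ∀ (n : ℤ) (a : A), del (n • a) = n • del a := fun n a => dh.map_zsmul n a
  have hD1 : D 1 = 0 := by have := hDleib 1 1; simpa using this
  have hd1 : del 1 = 0 := by have := hdleib 1 1; simpa using this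
  have hDint : ∀ n : ℤ, D (n : A) = 0 := by
    intro n
    rw [show ((n : A)) = n • (1 : A) by simp, hDz, hD1, smul_zero]
  have hdint : ∀ n : ℤ, del (n : A) = 0 := by
    intro n
    rw [show ((n : A)) = n • (1 : A) by simp, hdz, hd1, smul_zero]
  intro k l a b
  simp only [wThermalBracket, covDer, hDsub, hDadd, hDz, hDleib, hdsub, hdadd, hdz, hdleib,
    hcomm, hDint, hdint, smul_sub, smul_add, zsmul_eq_mul]
  push_cast
  ring
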